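/- arXiv:2210.13093 — 2 statements merged into one kernel-verified Lean document; each statement's English description precedes it below -/
import Mathlib

section
/- Let P, Q be commuting positive bounded operators on a Hilbert space H with P + Q = I. For every x ∈ H, ⟨x, P^{1/2}Q^{1/2} x⟩ = sup { r(x,x) : r a positive Hermitian sesquilinear form on H with |r(a,b)|² ≤ ⟨a,Pa⟩⟨b,Qb⟩ for all a,b }. -/
open CFC in
lemma sqrt_mono_aux {A : Type*} [CStarAlgebra A] [PartialOrder A] [StarOrderedRing A]
    {z : A} {w : Aˣ} (hz : 0 ≤ z) (hw : 0 ≤ (w : A)) (h : z * z ≤ (w : A) * w) :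
    z ≤ (w : A) := by
  have hwinv : (0 : A) ≤ (↑w⁻¹ : A) := CFC.inv_nonneg_of_nonneg w hw
  have hzsa : IsSelfAdjoint z := .of_nonneg hz
  -- step 1 : ‖z * w⁻¹‖ ≤ 1
  have hww : (0 : A) ≤ ((w * w : Aˣ) : A) := by
    have h0 := star_mul_self_nonneg (w : A)
    rwa [(IsSelfAdjoint.of_nonneg hw).star_eq] at h0
  have h1 : ‖z * (↑w⁻¹ : A)‖ ≤ 1 := by
    have hzz : (0 : A) ≤ z * z := by
      have h0 := star_mul_self_nonneg z
      rwa [hzsa.star_eq] at h0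
    have := (le_iff_norm_sqrt_mul_sqrt_inv (a := z * z) (b := w * w) hzz hww).mp h
    rwa [CFC.sqrt_mul_self z hz, show ((w*w)⁻¹ : Aˣ) = w⁻¹ * w⁻¹ by rw [mul_inv_rev],
      Units.val_mul, CFC.sqrt_mul_self (↑w⁻¹ : A) hwinv] at this
  -- abbreviations
  set u := CFC.sqrt (↑w⁻¹ : A) with hu_def
  set v := CFC.sqrt z with hv_def
  have hu : (0 : A) ≤ u := CFC.sqrt_nonneg _
  have hv : (0 : A) ≤ v := CFC.sqrt_nonneg _
  have huu : u * u = (↑w⁻¹ : A) := CFC.sqrt_mul_sqrt_self _ hwinv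
  have hvv : v * v = z := CFC.sqrt_mul_sqrt_self _ hz
  set N := u * z * u with hN_def
  have hN : (0 : A) ≤ N := by
    have := star_left_conjugate_nonneg hz u
    rwa [(IsSelfAdjoint.of_nonneg hu).star_eq] at this
  have hNsa : IsSelfAdjoint N := .of_nonneg hN
  -- power formula
  have hpow : ∀ k : ℕ, N ^ (k + 1) = u * ((z * (↑w⁻¹ : A)) ^ k * z) * u := by
    intro k
    induction k with
    | zero => simp [hN_def]
    | succ k ih =>
      rw [pow_succ, ih, hN_def]
      rw [pow_succ]
      simp only [mul_assoc]
      rw [← mul_assoc u u, huu]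
  -- norm bound
  set C := ‖u‖ * (‖z‖ * ‖u‖) with hC_def
  have hbound : ∀ k : ℕ, ‖N ^ (k + 1)‖ ≤ C := by
    intro k
    rw [hpow k]
    calc ‖u * ((z * (↑w⁻¹ : A)) ^ k * z) * u‖
        ≤ ‖u * ((z * (↑w⁻¹ : A)) ^ k * z)‖ * ‖u‖ := norm_mul_le _ _
      _ ≤ ‖u‖ * ‖(z * (↑w⁻¹ : A)) ^ k * z‖ * ‖u‖ := by
          gcongr; exact norm_mul_le _ _
      _ ≤ ‖u‖ * ‖z‖ * ‖u‖ := by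
          gcongr ‖u‖ * ?_ * ‖u‖
          · induction k with
            | zero => simp
            | succ k ih =>
              calc ‖(z * (↑w⁻¹ : A)) ^ (k + 1) * z‖
                  = ‖(z * (↑w⁻¹ : A)) * ((z * (↑w⁻¹ : A)) ^ k * z)‖ := by
                    rw [pow_succ']; rw [mul_assoc]
                _ ≤ ‖z * (↑w⁻¹ : A)‖ * ‖(z * (↑w⁻¹ : A)) ^ k * z‖ := norm_mul_le _ _
                _ ≤ 1 * ‖z‖ := by
                    apply mul_le_mul h1 ih (norm_nonneg _) zero_le_one
                _ = ‖z‖ := one_mul _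
      _ = C := by rw [hC_def]; ring
  -- ‖N‖ ≤ 1
  have hN1 : ‖N‖ ≤ 1 := by
    by_contra hc
    push_neg at hc
    obtain ⟨m, hm⟩ := ((tendsto_pow_atTop_atTop_of_one_lt hc).eventually_gt_atTop C).exists
    have h2m : ‖N‖ ^ m ≤ ‖N‖ ^ (2 ^ m) :=
      pow_le_pow_right₀ hc.le (Nat.le_of_lt (Nat.lt_two_pow_self (n := m)))
    have hsq : ‖N ^ (2 ^ m)‖ = ‖N‖ ^ (2 ^ m) := by
      have h' := congrArg NNReal.toReal (hNsa.nnnorm_pow_two_pow m)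
      simpa [NNReal.coe_pow, coe_nnnorm] using h'
    have : ‖N ^ (2 ^ m)‖ ≤ C := by
      have h2 : 2 ^ m = (2 ^ m - 1) + 1 := by
        have := Nat.one_le_two_pow (n := m); omega
      rw [h2]; exact hbound _
    linarith
  -- conclude
  have hvu : ‖v * u‖ ≤ 1 := by
    have hsq : ‖v * u‖ ^ 2 = ‖N‖ := by
      rw [sq, ← CStarRing.norm_star_mul_self, star_mul,
        (IsSelfAdjoint.of_nonneg hu).star_eq, (IsSelfAdjoint.of_nonneg hv).star_eq,
        hN_def]
      congr 1
      rw [← hvv]; noncomm_ring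
    nlinarith [norm_nonneg (v * u)]
  exact (le_iff_norm_sqrt_mul_sqrt_inv hz hw).mpr hvu

open scoped InnerProductSpace ComplexConjugate

section key
variable {H : Type*} [NormedAddCommGroup H] [InnerProductSpace ℂ H] [CompleteSpace H]

-- norms and inner products of selfadjoint operators
lemma symm_inner {T : H →L[ℂ] H} (hT : IsSelfAdjoint T) (x y : H) :
    ⟪T x, y⟫_ℂ = ⟪x, T y⟫_ℂ := by
  conv_lhs => rw [← hT.adjoint_eq]
  exact ContinuousLinearMap.adjoint_inner_left T y x

lemma norm_apply_sq_eq {T : H →L[ℂ] H} (hT : IsSelfAdjoint T) (y : H) :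
    ‖T y‖ ^ 2 = Complex.re ⟪y, (T * T) y⟫_ℂ := by
  rw [ContinuousLinearMap.mul_apply, ← symm_inner hT y (T y), ← @inner_self_eq_norm_sq ℂ]
  simp [RCLike.re_to_complex]

lemma inner_re_le_of_le {S T : H →L[ℂ] H} (hST : S ≤ T) (y : H) :
    Complex.re ⟪y, S y⟫_ℂ ≤ Complex.re ⟪y, T y⟫_ℂ := by
  have h := (ContinuousLinearMap.le_def S T).mp hST
  have h2 := h.inner_nonneg_right y
  rw [ContinuousLinearMap.sub_apply, inner_sub_right] at h2
  have h2 := (Complex.le_def.mp h2).1; simp only [Complex.zero_re, Complex.sub_re] at h2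
  linarith

lemma inner_re_nonneg_of_nonneg {T : H →L[ℂ] H} (hT : 0 ≤ T) (y : H) :
    0 ≤ Complex.re ⟪y, T y⟫_ℂ := by
  simpa using inner_re_le_of_le hT y

lemma le_of_norm_apply_le {S T : H →L[ℂ] H} (hS : IsSelfAdjoint S) (hT : IsSelfAdjoint T)
    (h : ∀ y, ‖S y‖ ≤ ‖T y‖) : S * S ≤ T * T := by
  rw [ContinuousLinearMap.le_def]
  have hSS : IsSelfAdjoint (S * S) := by rw [IsSelfAdjoint, star_mul, hS.star_eq]
  have hTT : IsSelfAdjoint (T * T) := by rw [IsSelfAdjoint, star_mul, hT.star_eq]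
  refine ⟨ContinuousLinearMap.isSelfAdjoint_iff_isSymmetric.mp (hTT.sub hSS), fun y => ?_⟩
  rw [ContinuousLinearMap.reApplyInnerSelf_apply, ContinuousLinearMap.sub_apply, inner_sub_left,
    map_sub]
  have h1 : Complex.re ⟪(S * S) y, y⟫_ℂ = ‖S y‖ ^ 2 := by
    rw [← inner_conj_symm, Complex.conj_re, norm_apply_sq_eq hS]
  have h2 : Complex.re ⟪(T * T) y, y⟫_ℂ = ‖T y‖ ^ 2 := by
    rw [← inner_conj_symm, Complex.conj_re, norm_apply_sq_eq hT]
  simp only [RCLike.re_to_complex]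
  rw [h1, h2]
  have := h y
  nlinarith [norm_nonneg (S y), norm_nonneg (T y)]

/-- Key domination lemma. -/
lemma dominated_le (aε bε v w X : H →L[ℂ] H)
    (hv : 0 ≤ v) (hw : 0 ≤ w) (hX : 0 ≤ X)
    (hav : aε * v = 1) (hva : v * aε = 1)
    (hbv : bε * v = w) (hwu : IsUnit w)
    (hdom : ∀ a b : H, ‖(⟪a, X b⟫_ℂ)‖ ≤ ‖aε a‖ * ‖bε b‖) :
    X ≤ aε * w * aε := by
  have hvsa : IsSelfAdjoint v := .of_nonneg hv
  have hXsa : IsSelfAdjoint X := .of_nonneg hX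
  have hwsa : IsSelfAdjoint w := .of_nonneg hw
  set Z := v * X * v with hZ_def
  have hZnn : 0 ≤ Z := by
    have := star_left_conjugate_nonneg hX v
    rwa [hvsa.star_eq] at this
  have hZsa : IsSelfAdjoint Z := .of_nonneg hZnn
  -- pointwise bound
  have hptw : ∀ y, ‖Z y‖ ≤ ‖w y‖ := by
    intro y
    set d := v (X (v y)) with hd_def
    have hZy : Z y = d := by
      simp [hZ_def, hd_def, ContinuousLinearMap.mul_apply]
    rw [hZy]
    have key : ‖d‖ ^ 2 ≤ ‖d‖ * ‖w y‖ := by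
      have e1 : ‖d‖ ^ 2 = Complex.re ⟪d, d⟫_ℂ := by
        rw [← @inner_self_eq_norm_sq ℂ]; simp [RCLike.re_to_complex]
      have e2 : ⟪d, d⟫_ℂ = ⟪X (v y), v d⟫_ℂ := by
        conv_lhs => rw [hd_def]
        exact symm_inner hvsa (X (v y)) d
      have e3 : Complex.re ⟪X (v y), v d⟫_ℂ = Complex.re ⟪v d, X (v y)⟫_ℂ := by
        rw [← inner_conj_symm, Complex.conj_re]
      have e4 : ‖⟪v d, X (v y)⟫_ℂ‖ ≤ ‖aε (v d)‖ * ‖bε (v y)‖ := hdom _ _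
      have e5 : aε (v d) = d := by
        rw [← ContinuousLinearMap.mul_apply, hav, ContinuousLinearMap.one_apply]
      have e6 : bε (v y) = w y := by
        rw [← ContinuousLinearMap.mul_apply, hbv]
      rw [e1, e2, e3]
      calc Complex.re ⟪v d, X (v y)⟫_ℂ ≤ ‖⟪v d, X (v y)⟫_ℂ‖ := Complex.re_le_norm _
        _ ≤ ‖aε (v d)‖ * ‖bε (v y)‖ := e4
        _ = ‖d‖ * ‖w y‖ := by rw [e5, e6]
    rcases eq_or_lt_of_le (norm_nonneg d) with h0 | h0
    · rw [← h0]; exact norm_nonneg _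
    · nlinarith
  -- operator inequality of squares
  have hsq : Z * Z ≤ w * w := le_of_norm_apply_le hZsa hwsa hptw
  -- lift w to a unit
  lift w to (H →L[ℂ] H)ˣ using hwu with wu hwu'
  have hZle : Z ≤ (wu : H →L[ℂ] H) := sqrt_mono_aux hZnn hw hsq
  have haεsa : IsSelfAdjoint aε := by
    have h1 := congrArg star hav
    rw [star_mul, hvsa.star_eq, star_one] at h1
    calc star aε = (aε * v) * star aε := by rw [hav, one_mul]
      _ = aε * (v * star aε) := by rw [mul_assoc]
      _ = aε := by rw [h1, mul_one]
  have hXconj : aε * Z * aε = X := by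
    show aε * (v * X * v) * aε = X
    calc aε * (v * X * v) * aε = (aε * v) * X * (v * aε) := by noncomm_ring
      _ = X := by rw [hav, hva, one_mul, mul_one]
  calc X = aε * Z * aε := hXconj.symm
    _ ≤ aε * (wu : H →L[ℂ] H) * aε := haεsa.conjugate_le_conjugate hZle

end key

set_option maxHeartbeats 2000000 in
/-- Maximality characterization of the geometric mean (Pusz–Woronowicz): for commuting
positive bounded `P Q` with `P + Q = 1`, `⟨x, P^{1/2}Q^{1/2} x⟩` is the supremum of
`r(x,x)` over all positive Hermitian sesquilinear forms `r` dominated by `P` and `Q`. -/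
theorem geometric_mean_sup (H : Type*) [NormedAddCommGroup H]
    [InnerProductSpace ℂ H] [CompleteSpace H]
    (P Q : H →L[ℂ] H) (hP : 0 ≤ P) (hQ : 0 ≤ Q) (hcomm : P * Q = Q * P)
    (hPQ : P + Q = 1) :
    ∀ x : H,
      (inner ℂ x ((P ^ (1 / 2 : ℝ) * Q ^ (1 / 2 : ℝ)) x) : ℂ).re =
        sSup { c : ℝ | ∃ r : H →ₗ⋆[ℂ] H →ₗ[ℂ] ℂ,
          (∀ a b : H, r a b = starRingEnd ℂ (r b a)) ∧
          (∀ a : H, 0 ≤ (r a a).re) ∧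
          (∀ a b : H, ‖r a b‖ ^ 2 ≤ (inner ℂ a (P a) : ℂ).re * (inner ℂ b (Q b) : ℂ).re) ∧
          c = (r x x).re } := by
  intro x
  have hQP : Q = 1 - P := eq_sub_of_add_eq' hPQ
  have hPsa : IsSelfAdjoint P := .of_nonneg hP
  have hspec0 : ∀ t ∈ spectrum ℝ P, 0 ≤ t := fun t ht => spectrum_nonneg_of_nonneg hP ht
  have hspec1 : ∀ t ∈ spectrum ℝ P, t ≤ 1 := by
    intro t ht
    have h1 : (1 : ℝ) - t ∈ spectrum ℝ Q := by
      rw [hQP, show (1 : H →L[ℂ] H) = algebraMap ℝ (H →L[ℂ] H) 1 by simp,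
        ← spectrum.singleton_sub_eq]
      exact Set.sub_mem_sub rfl ht
    have := spectrum_nonneg_of_nonneg hQ h1
    linarith
  set f : ℝ → ℝ := fun t => Real.sqrt t with hf_def
  set g : ℝ → ℝ := fun t => Real.sqrt (1 - t) with hg_def
  have hfc : Continuous f := Real.continuous_sqrt
  have hgc : Continuous g := Real.continuous_sqrt.comp (continuous_const.sub continuous_id)
  set A := cfc f P with hA_def
  set B := cfc g P with hB_def
  have hA : (0 : H →L[ℂ] H) ≤ A := cfc_nonneg fun t _ => Real.sqrt_nonneg _
  have hB : (0 : H →L[ℂ] H) ≤ B := cfc_nonneg fun t _ => Real.sqrt_nonneg _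
  have hAsa : IsSelfAdjoint A := .of_nonneg hA
  have hBsa : IsSelfAdjoint B := .of_nonneg hB
  have hA2 : A * A = P := by
    rw [hA_def, ← cfc_mul f f P hfc.continuousOn hfc.continuousOn]
    calc cfc (fun t => f t * f t) P = cfc (id : ℝ → ℝ) P :=
          cfc_congr fun t ht => Real.mul_self_sqrt (hspec0 t ht)
      _ = P := cfc_id ℝ P
  have hB2 : B * B = Q := by
    rw [hB_def, ← cfc_mul g g P hgc.continuousOn hgc.continuousOn]
    calc cfc (fun t => g t * g t) P = cfc (fun t : ℝ => 1 - t) P :=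
          cfc_congr fun t ht => Real.mul_self_sqrt (by linarith [hspec1 t ht])
      _ = cfc (fun _ : ℝ => (1:ℝ)) P - cfc (id : ℝ → ℝ) P := by
          rw [← cfc_sub (fun _ : ℝ => (1:ℝ)) (id : ℝ → ℝ) P (by fun_prop) (by fun_prop)]; rfl
      _ = 1 - P := by rw [cfc_const_one ℝ P, cfc_id ℝ P]
      _ = Q := hQP.symm
  have hcommAB : A * B = B * A := (cfc_commute_cfc f g P).eq
  have hABeq : A * B = cfc (fun t => f t * g t) P :=
    (cfc_mul f g P hfc.continuousOn hgc.continuousOn).symm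
  have hABnn : (0 : H →L[ℂ] H) ≤ A * B := by
    rw [hABeq]
    exact cfc_nonneg fun t _ => mul_nonneg (Real.sqrt_nonneg _) (Real.sqrt_nonneg _)
  have hPA : P ^ (1 / 2 : ℝ) = A := by rw [← CFC.sqrt_eq_rpow]; exact CFC.sqrt_unique hA2 hA
  have hQB : Q ^ (1 / 2 : ℝ) = B := by rw [← CFC.sqrt_eq_rpow]; exact CFC.sqrt_unique hB2 hB
  rw [hPA, hQB]
  clear_value A B
  -- bridge between quadratic forms
  have hbridge : ∀ y : H, (⟪A y, B y⟫_ℂ) = ⟪y, (A * B) y⟫_ℂ := by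
    intro y
    rw [ContinuousLinearMap.mul_apply, symm_inner hAsa]
  refine (IsGreatest.csSup_eq ⟨?_, ?_⟩).symm
  · -- membership: the form (a, b) ↦ ⟪A a, B b⟫ belongs to the set
    refine ⟨LinearMap.mk₂'ₛₗ (starRingEnd ℂ) (RingHom.id ℂ)
      (fun a b => ⟪A a, B b⟫_ℂ)
      (fun a a' b => by simp [inner_add_left])
      (fun c a b => by simp [inner_smul_left]; ring)
      (fun a b b' => by simp [inner_add_right])
      (fun c a b => by simp [inner_smul_right]), ?_, ?_, ?_, ?_⟩
    · -- Hermitian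
      intro a b
      simp only [LinearMap.mk₂'ₛₗ_apply]
      rw [← inner_conj_symm]
      congr 1
      rw [symm_inner hBsa, ← ContinuousLinearMap.mul_apply, ← hcommAB,
        ContinuousLinearMap.mul_apply, ← symm_inner hAsa]
    · -- positive
      intro a
      simp only [LinearMap.mk₂'ₛₗ_apply]
      rw [hbridge a]
      exact inner_re_nonneg_of_nonneg hABnn a
    · -- dominated
      intro a b
      simp only [LinearMap.mk₂'ₛₗ_apply]
      have h1 : ‖(⟪A a, B b⟫_ℂ)‖ ≤ ‖A a‖ * ‖B b‖ := norm_inner_le_norm _ _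
      have h2 : ‖A a‖ ^ 2 = (⟪a, P a⟫_ℂ).re := by
        rw [norm_apply_sq_eq hAsa, hA2]
      have h3 : ‖B b‖ ^ 2 = (⟪b, Q b⟫_ℂ).re := by
        rw [norm_apply_sq_eq hBsa, hB2]
      rw [← h2, ← h3]
      nlinarith [h1, norm_nonneg (⟪A a, B b⟫_ℂ), norm_nonneg (A a), norm_nonneg (B b)]
    · -- value
      simp only [LinearMap.mk₂'ₛₗ_apply]
      rw [hbridge x]
  · -- upper bound
    rintro c ⟨r, hherm, hpos, hdom, hc⟩
    have hdom' : ∀ a b : H, ‖r a b‖ ≤ ‖A a‖ * ‖B b‖ := by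
      intro a b
      have h2 : ‖A a‖ ^ 2 = (⟪a, P a⟫_ℂ).re := by rw [norm_apply_sq_eq hAsa, hA2]
      have h3 : ‖B b‖ ^ 2 = (⟪b, Q b⟫_ℂ).re := by rw [norm_apply_sq_eq hBsa, hB2]
      have h4 := hdom a b
      rw [← h2, ← h3] at h4
      have h5 : ‖r a b‖ ^ 2 ≤ (‖A a‖ * ‖B b‖) ^ 2 := by rw [mul_pow]; exact h4
      exact le_of_pow_le_pow_left₀ two_ne_zero (by positivity) h5
    -- construct the operator X representing r
    have hCb : ∀ b a : H, ‖(starRingEnd ℂ) (r a b)‖ ≤ ‖A‖ * ‖B b‖ * ‖a‖ := by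
      intro b a
      rw [RCLike.norm_conj]
      calc ‖r a b‖ ≤ ‖A a‖ * ‖B b‖ := hdom' a b
        _ ≤ (‖A‖ * ‖a‖) * ‖B b‖ := by
            gcongr
            exact A.le_opNorm a
        _ = ‖A‖ * ‖B b‖ * ‖a‖ := by ring
    have hφex : ∃ φ : H → H, ∀ a b : H, ⟪a, φ b⟫_ℂ = r a b := by
      refine ⟨fun b => (InnerProductSpace.toDual ℂ H).symm
        (LinearMap.mkContinuous
          { toFun := fun a => (starRingEnd ℂ) (r a b)
            map_add' := fun a a' => by simp
            map_smul' := fun cc a => by simp [LinearMap.map_smulₛₗ] }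
          (‖A‖ * ‖B b‖) (hCb b)), fun a b => ?_⟩
      rw [← inner_conj_symm, InnerProductSpace.toDual_symm_apply]
      simp
    obtain ⟨φ, hφ⟩ := hφex
    have hφadd : ∀ b b', φ (b + b') = φ b + φ b' := by
      intro b b'
      apply ext_inner_left ℂ
      intro v
      rw [inner_add_right, hφ, hφ, hφ]
      exact map_add (r v) b b'
    have hφsmul : ∀ (cc : ℂ) (b : H), φ (cc • b) = cc • φ b := by
      intro cc b
      apply ext_inner_left ℂ
      intro v
      rw [inner_smul_right, hφ, hφ]
      exact map_smul (r v) cc b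
    have hφnorm : ∀ b, ‖φ b‖ ≤ ‖A‖ * ‖B‖ * ‖b‖ := by
      intro b
      rcases eq_or_lt_of_le (norm_nonneg (φ b)) with h0 | h0
      · rw [← h0]; positivity
      · have e1 : ‖φ b‖ ^ 2 = Complex.re (r (φ b) b) := by
          rw [← hφ (φ b) b, ← @inner_self_eq_norm_sq ℂ]
          simp [RCLike.re_to_complex]
        have e2 : Complex.re (r (φ b) b) ≤ ‖r (φ b) b‖ := Complex.re_le_norm _
        have e3 := hdom' (φ b) b
        have e4 : ‖A (φ b)‖ ≤ ‖A‖ * ‖φ b‖ := A.le_opNorm _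
        have e5 : ‖B b‖ ≤ ‖B‖ * ‖b‖ := B.le_opNorm _
        have e6 : ‖A (φ b)‖ * ‖B b‖ ≤ (‖A‖ * ‖φ b‖) * (‖B‖ * ‖b‖) :=
          mul_le_mul e4 e5 (norm_nonneg _) (by positivity)
        nlinarith [norm_nonneg (A (φ b)), norm_nonneg (B b)]
    set X : H →L[ℂ] H := LinearMap.mkContinuous
      { toFun := φ, map_add' := hφadd, map_smul' := hφsmul }
      (‖A‖ * ‖B‖) hφnorm with hX_def
    have hXapp : ∀ a b : H, ⟪a, X b⟫_ℂ = r a b := fun a b => hφ a b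
    have hXsa : IsSelfAdjoint X := by
      rw [ContinuousLinearMap.isSelfAdjoint_iff_isSymmetric]
      intro u v2
      show ⟪X u, v2⟫_ℂ = ⟪u, X v2⟫_ℂ
      calc ⟪X u, v2⟫_ℂ = (starRingEnd ℂ) ⟪v2, X u⟫_ℂ := (inner_conj_symm _ _).symm
        _ = (starRingEnd ℂ) ((starRingEnd ℂ) (r u v2)) := by rw [hXapp, ← hherm v2 u]
        _ = r u v2 := Complex.conj_conj _
        _ = ⟪u, X v2⟫_ℂ := (hXapp u v2).symm
    have hXnn : (0 : H →L[ℂ] H) ≤ X := by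
      rw [ContinuousLinearMap.nonneg_iff_isPositive]
      refine ⟨ContinuousLinearMap.isSelfAdjoint_iff_isSymmetric.mp hXsa, fun y => ?_⟩
      show 0 ≤ RCLike.re ⟪X y, y⟫_ℂ
      have hy : ⟪X y, y⟫_ℂ = (starRingEnd ℂ) (r y y) := by
        rw [← inner_conj_symm, hXapp]
      rw [hy]
      simpa [RCLike.re_to_complex] using hpos y
    -- the ε-perturbation argument
    have hmain : ∀ ε : ℝ, 0 < ε →
        Complex.re ⟪x, X x⟫_ℂ ≤ Complex.re ⟪x, (A * B) x⟫_ℂ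
          + ε * Complex.re ⟪x, (A + B) x⟫_ℂ + ε ^ 2 * ‖x‖ ^ 2 := by
      intro ε hε
      set fε : ℝ → ℝ := fun t => f t + ε with hfε_def
      set gε : ℝ → ℝ := fun t => g t + ε with hgε_def
      have hfε_pos : ∀ t, 0 < fε t := fun t =>
        add_pos_of_nonneg_of_pos (Real.sqrt_nonneg t) hε
      have hgε_pos : ∀ t, 0 < gε t := fun t =>
        add_pos_of_nonneg_of_pos (Real.sqrt_nonneg _) hε
      have hfεc : Continuous fε := hfc.add continuous_const
      have hgεc : Continuous gε := hgc.add continuous_const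
      have hvc : Continuous (fun t => (fε t)⁻¹) := hfεc.inv₀ fun t => (hfε_pos t).ne'
      have hwc : Continuous (fun t => gε t / fε t) := hgεc.div hfεc fun t => (hfε_pos t).ne'
      set aε := cfc fε P with haε_def
      set bε := cfc gε P with hbε_def
      set v := cfc (fun t => (fε t)⁻¹) P with hv_def
      set w := cfc (fun t => gε t / fε t) P with hw_def
      have ha_nn : (0 : H →L[ℂ] H) ≤ aε := cfc_nonneg fun t _ => (hfε_pos t).le
      have hb_nn : (0 : H →L[ℂ] H) ≤ bε := cfc_nonneg fun t _ => (hgε_pos t).le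
      have hv_nn : (0 : H →L[ℂ] H) ≤ v := cfc_nonneg fun t _ => (inv_pos.mpr (hfε_pos t)).le
      have hw_nn : (0 : H →L[ℂ] H) ≤ w := cfc_nonneg fun t _ =>
        (div_pos (hgε_pos t) (hfε_pos t)).le
      have hva : v * aε = 1 := by
        rw [hv_def, haε_def, ← cfc_mul _ _ P hvc.continuousOn hfεc.continuousOn]
        calc cfc (fun t => (fε t)⁻¹ * fε t) P = cfc (fun _ : ℝ => (1 : ℝ)) P :=
              cfc_congr fun t _ => inv_mul_cancel₀ (hfε_pos t).ne'
          _ = 1 := cfc_const_one ℝ P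
      have hav : aε * v = 1 := by
        rw [hv_def, haε_def, ← cfc_mul _ _ P hfεc.continuousOn hvc.continuousOn]
        calc cfc (fun t => fε t * (fε t)⁻¹) P = cfc (fun _ : ℝ => (1 : ℝ)) P :=
              cfc_congr fun t _ => mul_inv_cancel₀ (hfε_pos t).ne'
          _ = 1 := cfc_const_one ℝ P
      have hbv : bε * v = w := by
        rw [hv_def, hbε_def, hw_def, ← cfc_mul _ _ P hgεc.continuousOn hvc.continuousOn]
        exact cfc_congr fun t _ => (div_eq_mul_inv _ _).symm
      have hwu : IsUnit w := by
        have hwinvc : Continuous (fun t => fε t / gε t) :=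
          hfεc.div hgεc fun t => (hgε_pos t).ne'
        have h1 : w * cfc (fun t => fε t / gε t) P = 1 := by
          rw [hw_def, ← cfc_mul _ _ P hwc.continuousOn hwinvc.continuousOn]
          calc cfc (fun t => gε t / fε t * (fε t / gε t)) P
              = cfc (fun _ : ℝ => (1 : ℝ)) P := cfc_congr fun t _ => by
                field_simp
                exact div_self (mul_pos (hgε_pos t) (hfε_pos t)).ne'
          _ = 1 := cfc_const_one ℝ P
        have h2 : cfc (fun t => fε t / gε t) P * w = 1 := by
          rw [hw_def, ← cfc_mul _ _ P hwinvc.continuousOn hwc.continuousOn]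
          calc cfc (fun t => fε t / gε t * (gε t / fε t)) P
              = cfc (fun _ : ℝ => (1 : ℝ)) P := cfc_congr fun t _ => by
                field_simp
                exact div_self (mul_pos (hfε_pos t) (hgε_pos t)).ne'
          _ = 1 := cfc_const_one ℝ P
        exact ⟨⟨w, cfc (fun t => fε t / gε t) P, h1, h2⟩, rfl⟩
      -- transfer of the domination to the regularized operators
      have hsqle : ∀ y : H, ‖A y‖ ≤ ‖aε y‖ := by
        intro y
        have hdiff : (0 : H →L[ℂ] H) ≤ aε * aε - A * A := by
          have heq : aε * aε - A * A = cfc (fun t => fε t * fε t - f t * f t) P := by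
            rw [haε_def, hA_def,
              cfc_sub _ _ P (by fun_prop) (by fun_prop),
              cfc_mul _ _ P hfεc.continuousOn hfεc.continuousOn,
              cfc_mul _ _ P hfc.continuousOn hfc.continuousOn]
          rw [heq]
          refine cfc_nonneg fun t _ => ?_
          have h5 : (0:ℝ) ≤ f t := Real.sqrt_nonneg t
          have h6 : fε t = f t + ε := rfl
          nlinarith
        have h7 : ‖A y‖ ^ 2 ≤ ‖aε y‖ ^ 2 := by
          rw [norm_apply_sq_eq hAsa, norm_apply_sq_eq (IsSelfAdjoint.of_nonneg ha_nn)]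
          have := inner_re_le_of_le (sub_nonneg.mp hdiff) y
          exact this
        nlinarith [norm_nonneg (A y), norm_nonneg (aε y)]
      have hsqle' : ∀ y : H, ‖B y‖ ≤ ‖bε y‖ := by
        intro y
        have hdiff : (0 : H →L[ℂ] H) ≤ bε * bε - B * B := by
          have heq : bε * bε - B * B = cfc (fun t => gε t * gε t - g t * g t) P := by
            rw [hbε_def, hB_def,
              cfc_sub _ _ P (by fun_prop) (by fun_prop),
              cfc_mul _ _ P hgεc.continuousOn hgεc.continuousOn,
              cfc_mul _ _ P hgc.continuousOn hgc.continuousOn]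
          rw [heq]
          refine cfc_nonneg fun t _ => ?_
          have h5 : (0:ℝ) ≤ g t := Real.sqrt_nonneg _
          have h6 : gε t = g t + ε := rfl
          nlinarith
        have h7 : ‖B y‖ ^ 2 ≤ ‖bε y‖ ^ 2 := by
          rw [norm_apply_sq_eq hBsa, norm_apply_sq_eq (IsSelfAdjoint.of_nonneg hb_nn)]
          exact inner_re_le_of_le (sub_nonneg.mp hdiff) y
        nlinarith [norm_nonneg (B y), norm_nonneg (bε y)]
      have hdomε : ∀ a b : H, ‖(⟪a, X b⟫_ℂ)‖ ≤ ‖aε a‖ * ‖bε b‖ := by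
        intro a b
        rw [hXapp]
        calc ‖r a b‖ ≤ ‖A a‖ * ‖B b‖ := hdom' a b
          _ ≤ ‖aε a‖ * ‖bε b‖ :=
            mul_le_mul (hsqle a) (hsqle' b) (norm_nonneg _) (norm_nonneg _)
      have hkey : X ≤ aε * w * aε :=
        dominated_le aε bε v w X hv_nn hw_nn hXnn hav hva hbv hwu hdomε
      have haw : aε * w * aε = cfc (fun t => fε t * gε t) P := by
        rw [haε_def, hw_def,
          ← cfc_mul _ _ P hfεc.continuousOn hwc.continuousOn,
          ← cfc_mul (fun x => fε x * (gε x / fε x)) _ P (hfεc.mul hwc).continuousOn hfεc.continuousOn]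
        exact cfc_congr fun t _ => by
          field_simp
      have hexp : cfc (fun t => fε t * gε t) P
          = A * B + ε • (A + B) + ε ^ 2 • (1 : H →L[ℂ] H) := by
        have hsum : A + B = cfc (fun t => f t + g t) P := by
          rw [hA_def, hB_def, ← cfc_add P _ _ hfc.continuousOn hgc.continuousOn]
        have hone : (ε ^ 2) • (1 : H →L[ℂ] H) = cfc (fun _ : ℝ => ε ^ 2) P := by
          rw [cfc_const (ε ^ 2) P, Algebra.algebraMap_eq_smul_one]
        rw [hABeq, hsum, hone, ← cfc_smul ε _ P (by fun_prop),
          ← cfc_add P _ _ (by fun_prop) (by fun_prop),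
          ← cfc_add P _ _ (by fun_prop) (by fun_prop)]
        refine cfc_congr fun t _ => ?_
        show fε t * gε t = f t * g t + ε • (f t + g t) + ε ^ 2
        simp only [smul_eq_mul, hfε_def, hgε_def]
        ring
      have hfinal : X ≤ A * B + ε • (A + B) + ε ^ 2 • (1 : H →L[ℂ] H) := by
        rw [← hexp, ← haw]; exact hkey
      have h8 := inner_re_le_of_le hfinal x
      have h9 : Complex.re ⟪x, (A * B + ε • (A + B) + ε ^ 2 • (1 : H →L[ℂ] H)) x⟫_ℂ
          = Complex.re ⟪x, (A * B) x⟫_ℂ + ε * Complex.re ⟪x, (A + B) x⟫_ℂ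
            + ε ^ 2 * ‖x‖ ^ 2 := by
        rw [ContinuousLinearMap.add_apply, ContinuousLinearMap.add_apply,
          inner_add_right, inner_add_right]
        rw [ContinuousLinearMap.smul_apply, ContinuousLinearMap.smul_apply,
          ContinuousLinearMap.one_apply,
          RCLike.real_smul_eq_coe_smul (K := ℂ), RCLike.real_smul_eq_coe_smul (K := ℂ),
          inner_smul_right, inner_smul_right]
        have hxx : Complex.re ⟪x, x⟫_ℂ = ‖x‖ ^ 2 := by
          rw [← @inner_self_eq_norm_sq ℂ]; simp [RCLike.re_to_complex]
        simp [Complex.smul_re, hxx, ← Complex.ofReal_pow, inner_add_right]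
      rw [h9] at h8
      exact h8
    -- conclusion
    have hL' : 0 ≤ Complex.re ⟪x, (A + B) x⟫_ℂ :=
      inner_re_nonneg_of_nonneg (add_nonneg hA hB) x
    have hcx : c = Complex.re ⟪x, X x⟫_ℂ := by rw [hXapp]; exact hc
    rw [hcx]
    apply le_of_forall_pos_le_add
    intro δ hδ
    set K := Complex.re ⟪x, (A + B) x⟫_ℂ + ‖x‖ ^ 2 with hK_def
    have hK : 0 ≤ K := by positivity
    set ε := min 1 (δ / (K + 1)) with hε_def
    have hε : 0 < ε := lt_min one_pos (div_pos hδ (by linarith))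
    have hε1 : ε ≤ 1 := min_le_left _ _
    have hε2 : ε ≤ δ / (K + 1) := min_le_right _ _
    have h1 := hmain ε hε
    have h2 : ε * Complex.re ⟪x, (A + B) x⟫_ℂ + ε ^ 2 * ‖x‖ ^ 2 ≤ ε * K := by
      have : ε ^ 2 ≤ ε := by nlinarith
      have hx2 : (0:ℝ) ≤ ‖x‖ ^ 2 := by positivity
      rw [hK_def]
      nlinarith
    have h3 : ε * K ≤ δ := by
      have h4 : ε * (K + 1) ≤ (δ / (K + 1)) * (K + 1) := by
        apply mul_le_mul_of_nonneg_right hε2 (by linarith)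
      rw [div_mul_cancel₀ δ (by linarith : K + 1 ≠ 0)] at h4
      nlinarith
    linarith
end

section
/- Let ω̂ and ν̂ be positive-definite density matrices on ℂⁿ. Then the limit −lim_{t→0⁺} (1/t)[Tr(ω̂^{1-t} ν̂^t) − Tr(ω̂)] exists and equals Tr(ω̂ log ω̂) − Tr(ω̂ log ν̂), i.e., Uhlmann's relative entropy for matrix algebras reduces to von Neumann's relative entropy. -/
open ComplexOrder Matrix Filter Topology
open scoped Matrix.Norms.L2Operator

noncomputable instance matrixCStarAlgebra {n : ℕ} :
    CStarAlgebra (Matrix (Fin n) (Fin n) ℂ) := {}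

/-- Real part of the trace of a product of two functional-calculus images, expressed
through eigenvalues and overlaps of eigenbases. -/
lemma trace_cfc_mul_cfc_re {n : ℕ} {w v : Matrix (Fin n) (Fin n) ℂ}
    (hw : w.IsHermitian) (hv : v.IsHermitian) (f g : ℝ → ℝ) :
    ((cfc f w * cfc g v).trace).re =
      ∑ i, ∑ j, f (hw.eigenvalues i) * g (hv.eigenvalues j) *
        Complex.normSq ((star (hw.eigenvectorUnitary : Matrix (Fin n) (Fin n) ℂ) *
          (hv.eigenvectorUnitary : Matrix (Fin n) (Fin n) ℂ)) i j) := by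
  set U : Matrix (Fin n) (Fin n) ℂ := (hw.eigenvectorUnitary : Matrix (Fin n) (Fin n) ℂ) with hU
  set V : Matrix (Fin n) (Fin n) ℂ := (hv.eigenvectorUnitary : Matrix (Fin n) (Fin n) ℂ) with hV
  set M : Matrix (Fin n) (Fin n) ℂ := star U * V with hM
  set Dm : Matrix (Fin n) (Fin n) ℂ := diagonal ((↑) ∘ f ∘ hw.eigenvalues) with hDm
  set Em : Matrix (Fin n) (Fin n) ℂ := diagonal ((↑) ∘ g ∘ hv.eigenvalues) with hEm
  have hUu : U * star U = 1 := Unitary.coe_mul_star_self _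
  have hUu' : star U * U = 1 := Unitary.coe_star_mul_self _
  have claim : (cfc f w) * (cfc g v) = U * (Dm * M * Em * star M) * star U := by
    rw [hw.cfc_eq, hv.cfc_eq]
    unfold Matrix.IsHermitian.cfc
    have hsM : star M = star V * U := by rw [hM, StarMul.star_mul, star_star]
    rw [hM, hsM]
    calc U * Dm * star U * (V * Em * star V)
        = U * Dm * star U * V * Em * star V * 1 := by rw [mul_one]; simp [mul_assoc]
      _ = U * (Dm * (star U * V) * Em * (star V * U)) * star U := by
          rw [← hUu]; simp only [mul_assoc]
  rw [claim]
  have htr : (U * (Dm * M * Em * star M) * star U).trace = (Dm * M * Em * star M).trace := by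
    rw [Matrix.trace_mul_cycle, ← mul_assoc, hUu', one_mul]
  rw [htr]
  have : (Dm * M * Em * star M).trace = ∑ i, ∑ j, (Dm * M) i j * ((Em * star M) j i) := by
    rw [show Dm * M * Em * star M = (Dm * M) * (Em * star M) by simp [mul_assoc]]
    simp [Matrix.trace, Matrix.mul_apply, Matrix.diag]
  rw [this]
  rw [Complex.re_sum]
  refine Finset.sum_congr rfl fun i _ => ?_
  rw [Complex.re_sum]
  refine Finset.sum_congr rfl fun j _ => ?_
  rw [hDm, hEm, Matrix.diagonal_mul, Matrix.diagonal_mul, Matrix.star_apply]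
  simp only [Function.comp_apply]
  rw [show ((f (hw.eigenvalues i) : ℂ)) * M i j * ((g (hv.eigenvalues j) : ℂ) * star (M i j))
      = (f (hw.eigenvalues i) : ℂ) * (g (hv.eigenvalues j) : ℂ) * (M i j * star (M i j)) by ring]
  rw [Complex.star_def, Complex.mul_conj]
  push_cast
  simp

/-- Row sums of the squared overlaps of two eigenbases are `1`. -/
lemma overlap_row_sum {n : ℕ} {w v : Matrix (Fin n) (Fin n) ℂ}
    (hw : w.IsHermitian) (hv : v.IsHermitian) (i : Fin n) :
    ∑ j, Complex.normSq ((star (hw.eigenvectorUnitary : Matrix (Fin n) (Fin n) ℂ) *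
      (hv.eigenvectorUnitary : Matrix (Fin n) (Fin n) ℂ)) i j) = 1 := by
  set U : Matrix (Fin n) (Fin n) ℂ := (hw.eigenvectorUnitary : Matrix (Fin n) (Fin n) ℂ)
  set V : Matrix (Fin n) (Fin n) ℂ := (hv.eigenvectorUnitary : Matrix (Fin n) (Fin n) ℂ)
  set M : Matrix (Fin n) (Fin n) ℂ := star U * V with hM
  have hMu : M * star M = 1 := by
    rw [hM, StarMul.star_mul, star_star, mul_assoc, ← mul_assoc V]
    rw [show V * star V = 1 from Unitary.coe_mul_star_self _, one_mul]
    exact Unitary.coe_star_mul_self _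
  have := congrArg (fun A : Matrix (Fin n) (Fin n) ℂ => (A i i).re) hMu
  simp only [Matrix.mul_apply, Matrix.one_apply_eq, Complex.one_re] at this
  rw [← this, Complex.re_sum]
  refine Finset.sum_congr rfl fun j _ => ?_
  rw [Matrix.star_apply, Complex.star_def, Complex.mul_conj]
  simp

lemma uhlmann_hasDerivAt {n : ℕ} (a b : Fin n → ℝ) (c : Fin n → Fin n → ℝ)
    (ha : ∀ i, 0 < a i) (hb : ∀ i, 0 < b i) :
    HasDerivAt (fun t : ℝ => ∑ i, ∑ j, a i ^ (1 - t) * b j ^ t * c i j)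
      (∑ i, ∑ j, a i * (Real.log (b j) - Real.log (a i)) * c i j) 0 := by
  have h : ∀ i j : Fin n, HasDerivAt (fun t : ℝ => a i ^ (1 - t) * b j ^ t * c i j)
      (a i * (Real.log (b j) - Real.log (a i)) * c i j) 0 := by
    intro i j
    have hfun : (fun t : ℝ => a i ^ (1 - t) * b j ^ t * c i j)
        = fun t : ℝ => Real.exp (Real.log (a i) + t * (Real.log (b j) - Real.log (a i))) * c i j := by
      funext t
      rw [Real.rpow_def_of_pos (ha i), Real.rpow_def_of_pos (hb j), ← Real.exp_add]
      ring_nf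
    rw [hfun]
    have h1 : HasDerivAt (fun t : ℝ => Real.log (a i) + t * (Real.log (b j) - Real.log (a i)))
        (Real.log (b j) - Real.log (a i)) 0 := by
      simpa using ((hasDerivAt_id (0:ℝ)).mul_const (Real.log (b j) - Real.log (a i))).const_add
        (Real.log (a i))
    have h2 := (h1.exp).mul_const (c i j)
    simpa [Real.exp_log (ha i), mul_comm, mul_assoc, mul_left_comm] using h2
  exact HasDerivAt.fun_sum fun i _ => HasDerivAt.fun_sum fun j _ => h i j

/-- For positive definite density matrices `ω̂, ν̂`, Uhlmann's relative entropy
`−lim_{t→0⁺} (1/t)[Tr(ω̂^{1-t} ν̂^t) − Tr(ω̂)]` exists and equals von Neumann's relative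
entropy `Tr(ω̂ log ω̂) − Tr(ω̂ log ν̂)` (powers and logarithms via the functional
calculus `cfc`). -/
theorem uhlmann_eq_vonNeumann {n : ℕ}
    (w v : Matrix (Fin n) (Fin n) ℂ)
    (hw : w.PosDef) (hv : v.PosDef) (hw1 : w.trace = 1) (hv1 : v.trace = 1) :
    Tendsto
      (fun t : ℝ => -(1 / t) *
        (((cfc (fun x : ℝ => x ^ (1 - t)) w * cfc (fun x : ℝ => x ^ t) v).trace).re -
          (w.trace).re))
      (𝓝[>] (0 : ℝ))
      (𝓝 (((w * cfc Real.log w).trace).re - ((w * cfc Real.log v).trace).re)) := by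
  set a : Fin n → ℝ := hw.1.eigenvalues with haa
  set b : Fin n → ℝ := hv.1.eigenvalues with hbb
  set c : Fin n → Fin n → ℝ := fun i j =>
    Complex.normSq ((star (hw.1.eigenvectorUnitary : Matrix (Fin n) (Fin n) ℂ) *
      (hv.1.eigenvectorUnitary : Matrix (Fin n) (Fin n) ℂ)) i j) with hcc
  have ha : ∀ i, 0 < a i := hw.eigenvalues_pos
  have hb : ∀ i, 0 < b i := hv.eigenvalues_pos
  have hrow : ∀ i, ∑ j, c i j = 1 := fun i => overlap_row_sum hw.1 hv.1 i
  set F : ℝ → ℝ := fun t => ∑ i, ∑ j, a i ^ (1 - t) * b j ^ t * c i j with hFF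
  -- identify the trace expression with F
  have hF : ∀ t : ℝ,
      ((cfc (fun x : ℝ => x ^ (1 - t)) w * cfc (fun x : ℝ => x ^ t) v).trace).re = F t :=
    fun t => trace_cfc_mul_cfc_re hw.1 hv.1 _ _
  -- F 0 = Re (trace w)
  have hid : cfc (fun x : ℝ => x) w = w := cfc_id' ℝ w hw.1
  have hwtr : (w.trace).re = F 0 := by
    have hone : cfc (fun _ : ℝ => (1:ℝ)) v = 1 := cfc_const_one ℝ v hv.1
    have h1 : cfc (fun x : ℝ => x) w * cfc (fun _ : ℝ => (1:ℝ)) v = w := by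
      rw [hid, hone, mul_one]
    conv_lhs => rw [← h1]
    rw [trace_cfc_mul_cfc_re hw.1 hv.1]
    simp [hFF, Real.rpow_zero]
    rfl
  -- Re trace (w * log w)
  have hlogw : ((w * cfc Real.log w).trace).re = ∑ i, a i * Real.log (a i) := by
    nth_rewrite 1 [← hid]
    rw [trace_cfc_mul_cfc_re hw.1 hw.1]
    rw [show star (hw.1.eigenvectorUnitary : Matrix (Fin n) (Fin n) ℂ) *
        (hw.1.eigenvectorUnitary : Matrix (Fin n) (Fin n) ℂ) = 1 from
      Unitary.coe_star_mul_self _]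
    simp [Matrix.one_apply, apply_ite Complex.normSq, Finset.sum_ite_eq, ← haa]
  -- Re trace (w * log v)
  have hlogv : ((w * cfc Real.log v).trace).re = ∑ i, ∑ j, a i * Real.log (b j) * c i j := by
    nth_rewrite 1 [← hid]
    exact trace_cfc_mul_cfc_re hw.1 hv.1 _ _
  -- the derivative
  set D : ℝ := ∑ i, ∑ j, a i * (Real.log (b j) - Real.log (a i)) * c i j with hDD
  have hD : HasDerivAt F D 0 := uhlmann_hasDerivAt a b c ha hb
  -- value identification
  have hval : ((w * cfc Real.log w).trace).re - ((w * cfc Real.log v).trace).re = -D := by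
    rw [hlogw, hlogv, hDD]
    rw [← Finset.sum_neg_distrib, ← Finset.sum_sub_distrib]
    have h2 : ∀ i, a i * Real.log (a i) = ∑ j, a i * Real.log (a i) * c i j := by
      intro i
      rw [← Finset.mul_sum, hrow i, mul_one]
    refine Finset.sum_congr rfl fun i _ => ?_
    rw [h2 i, ← Finset.sum_sub_distrib, ← Finset.sum_neg_distrib]
    exact Finset.sum_congr rfl fun j _ => by ring
  rw [hval]
  -- the limit from the derivative
  have hs : Tendsto (slope F 0) (𝓝[≠] (0:ℝ)) (𝓝 D) := hasDerivAt_iff_tendsto_slope.mp hD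
  have hs2 : Tendsto (slope F 0) (𝓝[>] (0:ℝ)) (𝓝 D) :=
    hs.mono_left (nhdsWithin_mono _ fun x hx => ne_of_gt hx)
  have hs3 : Tendsto (fun t => -(slope F 0 t)) (𝓝[>] (0:ℝ)) (𝓝 (-D)) := hs2.neg
  refine Tendsto.congr (fun t => ?_) hs3
  rw [slope_def_field, hF t, hwtr]
  ring
end
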